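/- Let A₃ = ℤ³ be the A₃ root lattice with simple roots α₁,α₂,α₃ (Gram matrix with B₃(α_j,α_k) = 2δ_{j,k} − δ_{j,k+1} − δ_{j+1,k}), fundamental weights β₁ = (3α₁+2α₂+α₃)/4, β₂ = (α₁+2α₂+α₃)/2, β₃ = (α₁+2α₂+3α₃)/4, and μ₃(s) := (s₁β₁+s₂β₂+s₃β₃)/p for s ∈ ℤ³, p ∈ ℕ. Then: (1) A₃ + μ₃(s) = ⋃_{γ∈{0,1,2}} ( 4(ℤ + (3s₁+2s₂+s₃+4γp)/(12p)) β₁ + (ℤ + (2(s₂−γp)+s₃)/(3p)) α₂ + (ℤ + ((s₂−γp)+2s₃)/(3p)) α₃ ); (2) A₃ + μ₃(s) = ⋃_{δ∈{0,1}} ( 2(ℤ + (s₁+2s₂+s₃+2δp)/(4p)) β₂ + (ℤ + (s₁−δp)/(2p)) α₁ + (ℤ + (s₃−δp)/(2p)) α₃ ); (3) A₃ + μ₃(s) = ⋃_{γ∈{0,1,2}} ( 4(ℤ + (s₁+2s₂+3s₃+4γp)/(12p)) β₃ + (ℤ + (2s₁+(s₂−γp))/(3p)) α₁ + (ℤ +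 (s₁+2(s₂−γp))/(3p)) α₂ ), with all unions disjoint. -/

import Mathlib

noncomputable section

/-- The simple roots of `A₃` in the simple-root basis. -/
def al1 : Fin 3 → ℝ := ![1, 0, 0]
def al2 : Fin 3 → ℝ := ![0, 1, 0]
def al3 : Fin 3 → ℝ := ![0, 0, 1]

/-- The fundamental weights of `A₃`: `β₁ = (3α₁+2α₂+α₃)/4`, `β₂ = (α₁+2α₂+α₃)/2`,
`β₃ = (α₁+2α₂+3α₃)/4`. -/
def be1 : Fin 3 → ℝ := ![3/4, 1/2, 1/4]
def be2 : Fin 3 → ℝ := ![1/2, 1, 1/2]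
def be3 : Fin 3 → ℝ := ![1/4, 1/2, 3/4]

/-- The shift `μ₃(s) = (s₁β₁ + s₂β₂ + s₃β₃)/p`. -/
def mu3 (p : ℕ) (s : Fin 3 → ℤ) : Fin 3 → ℝ :=
  fun i => ((s 0 : ℝ) * be1 i + (s 1 : ℝ) * be2 i + (s 2 : ℝ) * be3 i) / p

/-- The shifted lattice `A₃ + μ₃(s)`. -/
def cosetA3 (p : ℕ) (s : Fin 3 → ℤ) : Set (Fin 3 → ℝ) :=
  {x | ∃ ν : Fin 3 → ℤ, x = (fun i => (ν i : ℝ)) + mu3 p s}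

/-- Pieces of the decomposition along `β₁` and its orthogonal complement. -/
def pc1 (p : ℕ) (s : Fin 3 → ℤ) (γ : ℤ) : Set (Fin 3 → ℝ) :=
  {x | ∃ a b c : ℤ,
    x = (4 * ((a : ℝ) +
          (3*(s 0 : ℝ) + 2*(s 1 : ℝ) + (s 2 : ℝ) + 4*(γ:ℝ)*(p:ℝ)) / (12*(p:ℝ)))) • be1 +
        ((b : ℝ) + (2*((s 1 : ℝ) - (γ:ℝ)*(p:ℝ)) + (s 2 : ℝ)) / (3*(p:ℝ))) • al2 +
        ((c : ℝ) + (((s 1 : ℝ) - (γ:ℝ)*(p:ℝ)) + 2*(s 2 : ℝ)) / (3*(p:ℝ))) • al3}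

/-- Pieces of the decomposition along `β₂` and its orthogonal complement. -/
def pc2 (p : ℕ) (s : Fin 3 → ℤ) (δ : ℤ) : Set (Fin 3 → ℝ) :=
  {x | ∃ a b c : ℤ,
    x = (2 * ((a : ℝ) +
          ((s 0 : ℝ) + 2*(s 1 : ℝ) + (s 2 : ℝ) + 2*(δ:ℝ)*(p:ℝ)) / (4*(p:ℝ)))) • be2 +
        ((b : ℝ) + ((s 0 : ℝ) - (δ:ℝ)*(p:ℝ)) / (2*(p:ℝ))) • al1 +
        ((c : ℝ) + ((s 2 : ℝ) - (δ:ℝ)*(p:ℝ)) / (2*(p:ℝ))) • al3}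

/-- Pieces of the decomposition along `β₃` and its orthogonal complement. -/
def pc3 (p : ℕ) (s : Fin 3 → ℤ) (γ : ℤ) : Set (Fin 3 → ℝ) :=
  {x | ∃ a b c : ℤ,
    x = (4 * ((a : ℝ) +
          ((s 0 : ℝ) + 2*(s 1 : ℝ) + 3*(s 2 : ℝ) + 4*(γ:ℝ)*(p:ℝ)) / (12*(p:ℝ)))) • be3 +
        ((b : ℝ) + (2*(s 0 : ℝ) + ((s 1 : ℝ) - (γ:ℝ)*(p:ℝ))) / (3*(p:ℝ))) • al1 +
        ((c : ℝ) + ((s 0 : ℝ) + 2*((s 1 : ℝ) - (γ:ℝ)*(p:ℝ))) / (3*(p:ℝ))) • al2}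


lemma eq1 (p : ℕ) (hp : (p:ℝ) ≠ 0) (s : Fin 3 → ℤ) (γ a b c : ℤ) :
    (4 * ((a : ℝ) +
          (3*(s 0 : ℝ) + 2*(s 1 : ℝ) + (s 2 : ℝ) + 4*(γ:ℝ)*(p:ℝ)) / (12*(p:ℝ)))) • be1 +
        ((b : ℝ) + (2*((s 1 : ℝ) - (γ:ℝ)*(p:ℝ)) + (s 2 : ℝ)) / (3*(p:ℝ))) • al2 +
        ((c : ℝ) + (((s 1 : ℝ) - (γ:ℝ)*(p:ℝ)) + 2*(s 2 : ℝ)) / (3*(p:ℝ))) • al3 =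
    (fun i => ((![3*a+γ, 2*a+b, a+c] : Fin 3 → ℤ) i : ℝ)) + mu3 p s := by
  funext i
  fin_cases i <;>
    · simp [be1, be2, be3, al1, al2, al3, mu3]
      field_simp
      ring

lemma eq2 (p : ℕ) (hp : (p:ℝ) ≠ 0) (s : Fin 3 → ℤ) (δ a b c : ℤ) :
    (2 * ((a : ℝ) +
          ((s 0 : ℝ) + 2*(s 1 : ℝ) + (s 2 : ℝ) + 2*(δ:ℝ)*(p:ℝ)) / (4*(p:ℝ)))) • be2 +
        ((b : ℝ) + ((s 0 : ℝ) - (δ:ℝ)*(p:ℝ)) / (2*(p:ℝ))) • al1 +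
        ((c : ℝ) + ((s 2 : ℝ) - (δ:ℝ)*(p:ℝ)) / (2*(p:ℝ))) • al3 =
    (fun i => ((![a+b, 2*a+δ, a+c] : Fin 3 → ℤ) i : ℝ)) + mu3 p s := by
  funext i
  fin_cases i <;>
    · simp [be1, be2, be3, al1, al2, al3, mu3]
      field_simp
      ring

lemma eq3 (p : ℕ) (hp : (p:ℝ) ≠ 0) (s : Fin 3 → ℤ) (γ a b c : ℤ) :
    (4 * ((a : ℝ) +
          ((s 0 : ℝ) + 2*(s 1 : ℝ) + 3*(s 2 : ℝ) + 4*(γ:ℝ)*(p:ℝ)) / (12*(p:ℝ)))) • be3 +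
        ((b : ℝ) + (2*(s 0 : ℝ) + ((s 1 : ℝ) - (γ:ℝ)*(p:ℝ))) / (3*(p:ℝ))) • al1 +
        ((c : ℝ) + ((s 0 : ℝ) + 2*((s 1 : ℝ) - (γ:ℝ)*(p:ℝ))) / (3*(p:ℝ))) • al2 =
    (fun i => ((![a+b, 2*a+c, 3*a+γ] : Fin 3 → ℤ) i : ℝ)) + mu3 p s := by
  funext i
  fin_cases i <;>
    · simp [be1, be2, be3, al1, al2, al3, mu3]
      field_simp
      ring

lemma mem1 (p : ℕ) (hp : (p:ℝ) ≠ 0) (s : Fin 3 → ℤ) (ν : Fin 3 → ℤ) (γ : ℤ)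
    (hγ : ν 0 % 3 = γ) : ((fun i => ((ν i):ℝ)) + mu3 p s) ∈ pc1 p s γ := by
  refine ⟨ν 0 / 3, ν 1 - 2*(ν 0 / 3), ν 2 - (ν 0 / 3), ?_⟩
  rw [eq1 p hp s γ (ν 0 / 3) (ν 1 - 2*(ν 0 / 3)) (ν 2 - (ν 0 / 3))]
  congr 1
  funext i
  fin_cases i <;> simp <;> norm_cast <;> exact (by have hz : ((ν 0 : ℤ) : ℝ) = ((3 * (ν 0 / 3) + γ : ℤ) : ℝ) := congrArg (fun t : ℤ => (t : ℝ)) (by omega); push_cast at hz; linarith)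

lemma mem2 (p : ℕ) (hp : (p:ℝ) ≠ 0) (s : Fin 3 → ℤ) (ν : Fin 3 → ℤ) (δ : ℤ)
    (hδ : ν 1 % 2 = δ) : ((fun i => ((ν i):ℝ)) + mu3 p s) ∈ pc2 p s δ := by
  refine ⟨ν 1 / 2, ν 0 - (ν 1 / 2), ν 2 - (ν 1 / 2), ?_⟩
  rw [eq2 p hp s δ (ν 1 / 2) (ν 0 - (ν 1 / 2)) (ν 2 - (ν 1 / 2))]
  congr 1
  funext i
  fin_cases i <;> simp <;> norm_cast <;> exact (by have hz : ((ν 1 : ℤ) : ℝ) = ((2 * (ν 1 / 2) + δ : ℤ) : ℝ) := congrArg (fun t : ℤ => (t : ℝ)) (by omega); push_cast at hz; linarith)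

lemma mem3 (p : ℕ) (hp : (p:ℝ) ≠ 0) (s : Fin 3 → ℤ) (ν : Fin 3 → ℤ) (γ : ℤ)
    (hγ : ν 2 % 3 = γ) : ((fun i => ((ν i):ℝ)) + mu3 p s) ∈ pc3 p s γ := by
  refine ⟨ν 2 / 3, ν 0 - (ν 2 / 3), ν 1 - 2*(ν 2 / 3), ?_⟩
  rw [eq3 p hp s γ (ν 2 / 3) (ν 0 - (ν 2 / 3)) (ν 1 - 2*(ν 2 / 3))]
  congr 1
  funext i
  fin_cases i <;> simp <;> norm_cast <;> exact (by have hz : ((ν 2 : ℤ) : ℝ) = ((3 * (ν 2 / 3) + γ : ℤ) : ℝ) := congrArg (fun t : ℤ => (t : ℝ)) (by omega); push_cast at hz; linarith)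

lemma disj1 (p : ℕ) (hp : (p:ℝ) ≠ 0) (s : Fin 3 → ℤ) (γ γ' : ℤ)
    (h : ∀ a a' : ℤ, 3*a + γ ≠ 3*a' + γ') : Disjoint (pc1 p s γ) (pc1 p s γ') := by
  rw [Set.disjoint_left]
  rintro x ⟨a,b,c,rfl⟩ ⟨a',b',c',hx⟩
  rw [eq1 p hp s γ a b c, eq1 p hp s γ' a' b' c'] at hx
  have h0 := congrFun (add_right_cancel hx) 0
  simp at h0
  norm_cast at h0
  exact h a a' (Int.cast_injective (α := ℝ) (by push_cast; linarith))

lemma disj2 (p : ℕ) (hp : (p:ℝ) ≠ 0) (s : Fin 3 → ℤ) (δ δ' : ℤ)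
    (h : ∀ a a' : ℤ, 2*a + δ ≠ 2*a' + δ') : Disjoint (pc2 p s δ) (pc2 p s δ') := by
  rw [Set.disjoint_left]
  rintro x ⟨a,b,c,rfl⟩ ⟨a',b',c',hx⟩
  rw [eq2 p hp s δ a b c, eq2 p hp s δ' a' b' c'] at hx
  have h0 := congrFun (add_right_cancel hx) 1
  simp at h0
  norm_cast at h0
  exact h a a' (Int.cast_injective (α := ℝ) (by push_cast; linarith))

lemma disj3 (p : ℕ) (hp : (p:ℝ) ≠ 0) (s : Fin 3 → ℤ) (γ γ' : ℤ)
    (h : ∀ a a' : ℤ, 3*a + γ ≠ 3*a' + γ') : Disjoint (pc3 p s γ) (pc3 p s γ') := by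
  rw [Set.disjoint_left]
  rintro x ⟨a,b,c,rfl⟩ ⟨a',b',c',hx⟩
  rw [eq3 p hp s γ a b c, eq3 p hp s γ' a' b' c'] at hx
  have h0 := congrFun (add_right_cancel hx) 2
  simp at h0
  norm_cast at h0
  exact h a a' (Int.cast_injective (α := ℝ) (by push_cast; linarith))
/-- the three decompositions of the shifted lattice `A₃ + μ₃(s)` along
`β₁`, `β₂`, `β₃` and their orthogonal complements, with all unions disjoint. -/
theorem statement14 (p : ℕ) (hp : 0 < p) (s : Fin 3 → ℤ) :
    (cosetA3 p s = pc1 p s 0 ∪ pc1 p s 1 ∪ pc1 p s 2 ∧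
      Disjoint (pc1 p s 0) (pc1 p s 1) ∧ Disjoint (pc1 p s 0) (pc1 p s 2) ∧
      Disjoint (pc1 p s 1) (pc1 p s 2)) ∧
    (cosetA3 p s = pc2 p s 0 ∪ pc2 p s 1 ∧ Disjoint (pc2 p s 0) (pc2 p s 1)) ∧
    (cosetA3 p s = pc3 p s 0 ∪ pc3 p s 1 ∪ pc3 p s 2 ∧
      Disjoint (pc3 p s 0) (pc3 p s 1) ∧ Disjoint (pc3 p s 0) (pc3 p s 2) ∧
      Disjoint (pc3 p s 1) (pc3 p s 2)) := by
  have hp0 : (p:ℝ) ≠ 0 := Nat.cast_ne_zero.mpr hp.ne'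
  refine ⟨⟨?_, ?_, ?_, ?_⟩, ⟨?_, ?_⟩, ⟨?_, ?_, ?_, ?_⟩⟩
  · ext x
    constructor
    · rintro ⟨ν, rfl⟩
      have h3 : ν 0 % 3 = 0 ∨ ν 0 % 3 = 1 ∨ ν 0 % 3 = 2 := by omega
      rcases h3 with h | h | h
      · exact Or.inl (Or.inl (mem1 p hp0 s ν 0 h))
      · exact Or.inl (Or.inr (mem1 p hp0 s ν 1 h))
      · exact Or.inr (mem1 p hp0 s ν 2 h)
    · rintro ((⟨a,b,c,rfl⟩ | ⟨a,b,c,rfl⟩) | ⟨a,b,c,rfl⟩)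
      · exact ⟨_, eq1 p hp0 s 0 a b c⟩
      · exact ⟨_, eq1 p hp0 s 1 a b c⟩
      · exact ⟨_, eq1 p hp0 s 2 a b c⟩
  · exact disj1 p hp0 s 0 1 (by omega)
  · exact disj1 p hp0 s 0 2 (by omega)
  · exact disj1 p hp0 s 1 2 (by omega)
  · ext x
    constructor
    · rintro ⟨ν, rfl⟩
      have h2 : ν 1 % 2 = 0 ∨ ν 1 % 2 = 1 := by omega
      rcases h2 with h | h
      · exact Or.inl (mem2 p hp0 s ν 0 h)
      · exact Or.inr (mem2 p hp0 s ν 1 h)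
    · rintro (⟨a,b,c,rfl⟩ | ⟨a,b,c,rfl⟩)
      · exact ⟨_, eq2 p hp0 s 0 a b c⟩
      · exact ⟨_, eq2 p hp0 s 1 a b c⟩
  · exact disj2 p hp0 s 0 1 (by omega)
  · ext x
    constructor
    · rintro ⟨ν, rfl⟩
      have h3 : ν 2 % 3 = 0 ∨ ν 2 % 3 = 1 ∨ ν 2 % 3 = 2 := by omega
      rcases h3 with h | h | h
      · exact Or.inl (Or.inl (mem3 p hp0 s ν 0 h))
      · exact Or.inl (Or.inr (mem3 p hp0 s ν 1 h))
      · exact Or.inr (mem3 p hp0 s ν 2 h)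
    · rintro ((⟨a,b,c,rfl⟩ | ⟨a,b,c,rfl⟩) | ⟨a,b,c,rfl⟩)
      · exact ⟨_, eq3 p hp0 s 0 a b c⟩
      · exact ⟨_, eq3 p hp0 s 1 a b c⟩
      · exact ⟨_, eq3 p hp0 s 2 a b c⟩

  · exact disj3 p hp0 s 0 1 (by omega)
  · exact disj3 p hp0 s 0 2 (by omega)
  · exact disj3 p hp0 s 1 2 (by omega)
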